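/- For any numerical semigroup S = ⟨n₁,…,n_k⟩ with n₁ < ⋯ < n_k, setting N = 2k n₂ n_k² + n₁ n_k, we have Δ(n) = Δ(n − n₁n_k) for every n ∈ S with n ≥ N. Consequently Δ(S) = ⋃_{n ∈ S, n < N} Δ(n). -/

import Mathlib

/-- The set of factorization lengths of `n` over the generators `gens`. -/
def lenSet (k : ℕ) (gens : Fin k → ℕ) (n : ℕ) : Set ℕ :=
  {l | ∃ x : Fin k → ℕ, n = ∑ i, x i * gens i ∧ l = ∑ i, x i}

/-- The delta set Δ(n): gaps between consecutive factorization lengths of n. -/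
def deltaSet (k : ℕ) (gens : Fin k → ℕ) (n : ℕ) : Set ℕ :=
  {d | 0 < d ∧ ∃ l, l ∈ lenSet k gens n ∧ l + d ∈ lenSet k gens n ∧
    ∀ j, l < j → j < l + d → j ∉ lenSet k gens n}

namespace CHK

variable {k : ℕ}

lemma sum_comm_outside (w z z' : Fin k → ℕ) (S : Finset (Fin k))
    (h : ∀ j ∉ S, z' j = z j) :
    (∑ i, z' i * w i) + ∑ i ∈ S, z i * w i
      = (∑ i, z i * w i) + ∑ i ∈ S, z' i * w i := by
  have h1 : ∀ (f : Fin k → ℕ), ∑ i, f i * w i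
      = ∑ i ∈ Finset.univ \ S, f i * w i + ∑ i ∈ S, f i * w i := by
    intro f
    rw [Finset.sum_sdiff (Finset.subset_univ S)]
  rw [h1 z', h1 z]
  have h2 : ∑ i ∈ Finset.univ \ S, z' i * w i = ∑ i ∈ Finset.univ \ S, z i * w i := by
    apply Finset.sum_congr rfl
    intro j hj
    rw [h j (Finset.mem_sdiff.mp hj).2]
  omega

lemma sum_comm_outside' (z z' : Fin k → ℕ) (S : Finset (Fin k))
    (h : ∀ j ∉ S, z' j = z j) :
    (∑ i, z' i) + ∑ i ∈ S, z i = (∑ i, z i) + ∑ i ∈ S, z' i := by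
  have := sum_comm_outside (fun _ => 1) z z' S h
  simpa using this

lemma lenSet_add (gens : Fin k → ℕ) (j : Fin k) (q x l : ℕ)
    (hl : l ∈ lenSet k gens x) :
    l + q ∈ lenSet k gens (x + q * gens j) := by
  obtain ⟨z, hz, hlz⟩ := hl
  set z₁ : Fin k → ℕ := fun i => if i = j then z i + q else z i with hz₁
  have hvj : z₁ j = z j + q := by simp [hz₁]
  refine ⟨z₁, ?_, ?_⟩
  · have h := sum_comm_outside gens z z₁ {j} (by intro i hi; simp at hi; simp [hz₁, hi])
    rw [Finset.sum_singleton, Finset.sum_singleton, hvj] at h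
    rw [hz]
    have : (z j + q) * gens j = z j * gens j + q * gens j := by ring
    omega
  · have h := sum_comm_outside' z z₁ {j} (by intro i hi; simp at hi; simp [hz₁, hi])
    rw [Finset.sum_singleton, Finset.sum_singleton, hvj] at h
    omega

lemma mem_closure_iff (gens : Fin k → ℕ) (n : ℕ) :
    n ∈ AddSubmonoid.closure (Set.range gens) ↔ ∃ z : Fin k → ℕ, n = ∑ i, z i * gens i := by
  constructor
  · intro h
    induction h using AddSubmonoid.closure_induction with
    | mem g hg =>
      obtain ⟨i, rfl⟩ := hg
      exact ⟨fun j => if j = i then 1 else 0, by simp [Finset.sum_ite_eq']⟩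
    | zero => exact ⟨0, by simp⟩
    | add p q _ _ hp hq =>
      obtain ⟨zp, rfl⟩ := hp
      obtain ⟨zq, rfl⟩ := hq
      exact ⟨zp + zq, by simp [add_mul, Finset.sum_add_distrib]⟩
  · rintro ⟨z, rfl⟩
    apply AddSubmonoid.sum_mem
    intro i _
    have : z i • gens i ∈ AddSubmonoid.closure (Set.range gens) :=
      nsmul_mem (AddSubmonoid.subset_closure (Set.mem_range_self i)) (z i)
    simpa [smul_eq_mul, mul_comm] using this

lemma sat (hk : 2 ≤ k) (gens : Fin k → ℕ) (hmono : StrictMono gens) (z : Fin k → ℕ) :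
    ∃ z' : Fin k → ℕ, (∑ i, z' i * gens i = ∑ i, z i * gens i) ∧ (∑ i, z' i = ∑ i, z i) ∧
      ∀ i : Fin k, 0 < i.1 → i.1 + 1 < k →
        z' i < gens ⟨k-1, Nat.sub_lt (lt_of_lt_of_le two_pos hk) one_pos⟩ - gens ⟨0, lt_of_lt_of_le two_pos hk⟩ := by
  set i0 : Fin k := ⟨0, lt_of_lt_of_le two_pos hk⟩ with hi0
  set iK : Fin k := ⟨k-1, Nat.sub_lt (lt_of_lt_of_le two_pos hk) one_pos⟩ with hiK
  set a := gens i0 with ha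
  set b := gens iK with hb
  have hab : a < b := hmono (by simp [Fin.lt_def, hi0, hiK]; omega)
  set mids : Finset (Fin k) := Finset.univ.filter (fun i : Fin k => 0 < i.1 ∧ i.1+1 < k)
    with hmids
  suffices H : ∀ (μ : ℕ) (z : Fin k → ℕ), (∑ i ∈ mids, z i) ≤ μ →
      ∃ z' : Fin k → ℕ, (∑ i, z' i * gens i = ∑ i, z i * gens i) ∧
        (∑ i, z' i = ∑ i, z i) ∧
        ∀ i : Fin k, 0 < i.1 → i.1 + 1 < k → z' i < b - a by
    exact H _ z le_rfl
  intro μ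
  induction μ with
  | zero =>
    intro z hz
    refine ⟨z, rfl, rfl, fun i h1 h2 => ?_⟩
    have hi : i ∈ mids := by simp [hmids, h1, h2]
    have hz0 : z i = 0 := by
      have := Finset.single_le_sum (f := z) (fun i _ => Nat.zero_le _) hi
      omega
    omega
  | succ μ ih =>
    intro z hz
    by_cases hall : ∀ i : Fin k, 0 < i.1 → i.1 + 1 < k → z i < b - a
    · exact ⟨z, rfl, rfl, hall⟩
    · push_neg at hall
      obtain ⟨i, h1, h2, hge⟩ := hall
      have hii0 : i ≠ i0 := by
        intro h; rw [h] at h1; simp [hi0] at h1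
      have hiiK : i ≠ iK := by
        intro h; rw [h] at h2; simp [hiK] at h2; omega
      have hi0K : i0 ≠ iK := by
        simp [hi0, hiK, Fin.ext_iff]; omega
      have hga : a < gens i := hmono (by simp [Fin.lt_def, hi0]; omega)
      have hgb : gens i < b := hmono (by simp [Fin.lt_def, hiK]; omega)
      set z₁ : Fin k → ℕ := fun j =>
        if j = i then z i - (b - a)
        else if j = i0 then z i0 + (b - gens i)
        else if j = iK then z iK + (gens i - a)
        else z j with hz₁
      have hout : ∀ j ∉ ({i, i0, iK} : Finset (Fin k)), z₁ j = z j := by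
        intro j hj
        simp at hj
        simp [hz₁, hj.1, hj.2.1, hj.2.2]
      have hvi : z₁ i = z i - (b - a) := by simp [hz₁]
      have hv0 : z₁ i0 = z i0 + (b - gens i) := by simp [hz₁, Ne.symm hii0]
      have hvK : z₁ iK = z iK + (gens i - a) := by
        simp [hz₁, Ne.symm hiiK, Ne.symm hi0K]
      have hSv : ∑ j ∈ ({i, i0, iK} : Finset (Fin k)), z₁ j * gens j
          = ∑ j ∈ ({i, i0, iK} : Finset (Fin k)), z j * gens j := by
        rw [Finset.sum_insert (by simp [hii0, hiiK]),
          Finset.sum_insert (by simp [hi0K]), Finset.sum_singleton,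
          Finset.sum_insert (by simp [hii0, hiiK]),
          Finset.sum_insert (by simp [hi0K]), Finset.sum_singleton]
        rw [hvi, hv0, hvK]
        zify [hge, le_of_lt hga, le_of_lt hgb, le_of_lt hab]
        ring
      have hSs : ∑ j ∈ ({i, i0, iK} : Finset (Fin k)), z₁ j
          = ∑ j ∈ ({i, i0, iK} : Finset (Fin k)), z j := by
        rw [Finset.sum_insert (by simp [hii0, hiiK]),
          Finset.sum_insert (by simp [hi0K]), Finset.sum_singleton,
          Finset.sum_insert (by simp [hii0, hiiK]),
          Finset.sum_insert (by simp [hi0K]), Finset.sum_singleton]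
        rw [hvi, hv0, hvK]
        omega
      have hv : ∑ j, z₁ j * gens j = ∑ j, z j * gens j := by
        have := sum_comm_outside gens z z₁ {i, i0, iK} hout
        omega
      have hs : ∑ j, z₁ j = ∑ j, z j := by
        have := sum_comm_outside' z z₁ {i, i0, iK} hout
        omega
      have hmid : ∑ j ∈ mids, z₁ j ≤ μ := by
        have hiM : i ∈ mids := by simp [hmids, h1, h2]
        have e1 : ∑ j ∈ mids, z₁ j = ∑ j ∈ mids.erase i, z₁ j + z₁ i :=
          (Finset.sum_erase_add _ _ hiM).symm
        have e2 : ∑ j ∈ mids, z j = ∑ j ∈ mids.erase i, z j + z i :=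
          (Finset.sum_erase_add _ _ hiM).symm
        have e3 : ∑ j ∈ mids.erase i, z₁ j = ∑ j ∈ mids.erase i, z j := by
          apply Finset.sum_congr rfl
          intro j hj
          have hji : j ≠ i := (Finset.mem_erase.mp hj).1
          have hjm := (Finset.mem_erase.mp hj).2
          simp [hmids] at hjm
          have hj0 : j ≠ i0 := by
            intro h; rw [h] at hjm; simp [hi0] at hjm
          have hjK : j ≠ iK := by
            intro h; rw [h] at hjm; simp [hiK] at hjm; omega
          simp [hz₁, hji, hj0, hjK]
        omega
      obtain ⟨z', hv', hs', hlt⟩ := ih z₁ hmid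
      exact ⟨z', by omega, by omega, hlt⟩


lemma sum_split2 (hk : 2 ≤ k) (f : Fin k → ℕ) :
    ∑ i, f i = (∑ i ∈ (Finset.univ.erase (⟨0, lt_of_lt_of_le two_pos hk⟩ : Fin k)).erase ⟨k-1, Nat.sub_lt (lt_of_lt_of_le two_pos hk) one_pos⟩, f i)
      + f ⟨k-1, Nat.sub_lt (lt_of_lt_of_le two_pos hk) one_pos⟩ + f ⟨0, lt_of_lt_of_le two_pos hk⟩ := by
  have h1 : (⟨k-1, Nat.sub_lt (lt_of_lt_of_le two_pos hk) one_pos⟩ : Fin k) ∈ Finset.univ.erase (⟨0, lt_of_lt_of_le two_pos hk⟩ : Fin k) := by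
    simp [Finset.mem_erase, Fin.ext_iff]; omega
  rw [Finset.sum_erase_add _ _ h1, Finset.sum_erase_add _ _ (Finset.mem_univ _)]

lemma card_mid (hk : 2 ≤ k) :
    ((Finset.univ.erase (⟨0, lt_of_lt_of_le two_pos hk⟩ : Fin k)).erase ⟨k-1, Nat.sub_lt (lt_of_lt_of_le two_pos hk) one_pos⟩).card = k - 2 := by
  rw [Finset.card_erase_of_mem (by simp [Finset.mem_erase, Fin.ext_iff]; omega),
    Finset.card_erase_of_mem (Finset.mem_univ _)]
  simp
  omega

lemma mid_spec (hk : 2 ≤ k) {j : Fin k}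
    (hj : j ∈ (Finset.univ.erase (⟨0, lt_of_lt_of_le two_pos hk⟩ : Fin k)).erase ⟨k-1, Nat.sub_lt (lt_of_lt_of_le two_pos hk) one_pos⟩) :
    0 < j.1 ∧ j.1 + 1 < k := by
  simp only [Finset.mem_erase, Finset.mem_univ, and_true, Fin.ext_iff] at hj
  have h0 : ((⟨0, lt_of_lt_of_le two_pos hk⟩ : Fin k) : Fin k).1 = 0 := rfl
  have hK : ((⟨k-1, Nat.sub_lt (lt_of_lt_of_le two_pos hk) one_pos⟩ : Fin k) : Fin k).1 = k-1 := rfl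
  have := j.2
  omega

lemma gens_le (hk : 2 ≤ k) (gens : Fin k → ℕ) (hmono : StrictMono gens) (i : Fin k) :
    gens ⟨0, lt_of_lt_of_le two_pos hk⟩ ≤ gens i ∧ gens i ≤ gens ⟨k-1, Nat.sub_lt (lt_of_lt_of_le two_pos hk) one_pos⟩ := by
  constructor
  · exact hmono.monotone (by simp [Fin.le_def])
  · exact hmono.monotone (by simp [Fin.le_def]; have := i.2; omega)

lemma W1 (hk : 2 ≤ k) (gens : Fin k → ℕ) (hmono : StrictMono gens) {x l : ℕ}
    (hl : l ∈ lenSet k gens x) :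
    l + (gens ⟨k-1, Nat.sub_lt (lt_of_lt_of_le two_pos hk) one_pos⟩ - gens ⟨0, lt_of_lt_of_le two_pos hk⟩) ∈ lenSet k gens x ∨
      ∀ l'' ∈ lenSet k gens x, gens ⟨0, lt_of_lt_of_le two_pos hk⟩ * l'' < gens ⟨0, lt_of_lt_of_le two_pos hk⟩ * l +
        ((k-2)*((gens ⟨k-1, Nat.sub_lt (lt_of_lt_of_le two_pos hk) one_pos⟩ - gens ⟨0, lt_of_lt_of_le two_pos hk⟩)
          *(gens ⟨k-1, Nat.sub_lt (lt_of_lt_of_le two_pos hk) one_pos⟩ - gens ⟨0, lt_of_lt_of_le two_pos hk⟩))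
          + gens ⟨0, lt_of_lt_of_le two_pos hk⟩ * (gens ⟨k-1, Nat.sub_lt (lt_of_lt_of_le two_pos hk) one_pos⟩ - gens ⟨0, lt_of_lt_of_le two_pos hk⟩) + 1) := by
  set i0 : Fin k := ⟨0, lt_of_lt_of_le two_pos hk⟩ with hi0
  set iK : Fin k := ⟨k-1, Nat.sub_lt (lt_of_lt_of_le two_pos hk) one_pos⟩ with hiK
  set a := gens i0 with ha
  set b := gens iK with hb
  have hi0K : i0 ≠ iK := by simp [hi0, hiK, Fin.ext_iff]; omega
  have hab : a < b := hmono (by simp [Fin.lt_def, hi0, hiK]; omega)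
  have hga : ∀ i : Fin k, a ≤ gens i ∧ gens i ≤ b := fun i => gens_le hk gens hmono i
  obtain ⟨z, hzx, hlz⟩ := hl
  obtain ⟨z', hv, hs, hmid0⟩ := sat hk gens hmono z
  have hmid : ∀ i : Fin k, 0 < i.1 → i.1 + 1 < k → z' i < b - a := hmid0
  clear hmid0
  by_cases hKa : a ≤ z' iK
  · left
    set z₁ : Fin k → ℕ := fun j =>
      if j = iK then z' iK - a else if j = i0 then z' i0 + b else z' j with hz₁
    have hvK : z₁ iK = z' iK - a := by simp [hz₁]
    have hv0 : z₁ i0 = z' i0 + b := by simp [hz₁, hi0K]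
    have hout : ∀ j ∉ ({iK, i0} : Finset (Fin k)), z₁ j = z' j := by
      intro j hj; simp at hj; simp [hz₁, hj.1, hj.2]
    have hcv := sum_comm_outside gens z' z₁ {iK, i0} hout
    have hcs := sum_comm_outside' z' z₁ {iK, i0} hout
    rw [Finset.sum_insert (by simp [Ne.symm hi0K]), Finset.sum_singleton,
      Finset.sum_insert (by simp [Ne.symm hi0K]), Finset.sum_singleton] at hcv hcs
    rw [hvK, hv0] at hcv hcs
    rw [show gens iK = b from rfl, show gens i0 = a from rfl] at hcv
    have hveq : ∑ i, z₁ i * gens i = ∑ i, z' i * gens i := by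
      have e : (z' iK - a) * b + (z' i0 + b) * a = z' iK * b + z' i0 * a := by
        zify [hKa]; ring
      omega
    refine ⟨z₁, by omega, by omega⟩
  · right
    rintro l'' ⟨w, hwx, hwl⟩
    push_neg at hKa
    have h1 : a * l'' ≤ x := by
      rw [hwl, hwx, Finset.mul_sum]
      apply Finset.sum_le_sum
      intro i _
      calc a * w i = w i * a := by ring
      _ ≤ w i * gens i := Nat.mul_le_mul_left _ (hga i).1
    have h2 : x = a * l + ∑ i, z' i * (gens i - a) := by
      have e : ∀ i : Fin k, z' i * gens i = z' i * a + z' i * (gens i - a) := by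
        intro i
        obtain ⟨d, hd⟩ : ∃ d, gens i = a + d := ⟨gens i - a, by have := (hga i).1; omega⟩
        rw [hd, Nat.add_sub_cancel_left]; ring
      have e2 : (∑ i, z' i * a) = a * l := by
        rw [← Finset.sum_mul, hs, ← hlz, mul_comm]
      calc x = ∑ i, z' i * gens i := by omega
      _ = ∑ i, (z' i * a + z' i * (gens i - a)) := Finset.sum_congr rfl (fun i _ => e i)
      _ = (∑ i, z' i * a) + ∑ i, z' i * (gens i - a) := Finset.sum_add_distrib
      _ = a * l + ∑ i, z' i * (gens i - a) := by rw [e2]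
    have h3 : ∑ i, z' i * (gens i - a) ≤ (k-2)*((b - a - 1)*(b-a)) + (a-1)*(b-a) := by
      have hsplit : ∑ i, z' i * (gens i - a)
          = (∑ i ∈ (Finset.univ.erase i0).erase iK, z' i * (gens i - a))
            + z' iK * (gens iK - a) + z' i0 * (gens i0 - a) :=
        sum_split2 hk (fun i => z' i * (gens i - a))
      rw [hsplit]
      have e0 : z' i0 * (gens i0 - a) = 0 := by
        rw [show gens i0 = a from rfl]; simp
      have eK : z' iK * (gens iK - a) ≤ (a-1) * (b-a) :=
        Nat.mul_le_mul (by omega) (by rw [show gens iK = b from rfl])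
      have eE : ∑ i ∈ (Finset.univ.erase i0).erase iK, z' i * (gens i - a)
          ≤ (k-2) * ((b - a - 1)*(b-a)) := by
        have hcard : ((Finset.univ.erase i0).erase iK).card = k - 2 := card_mid hk
        calc ∑ i ∈ (Finset.univ.erase i0).erase iK, z' i * (gens i - a)
            ≤ ∑ _i ∈ (Finset.univ.erase i0).erase iK, (b - a - 1)*(b-a) := by
              apply Finset.sum_le_sum
              intro j hj
              obtain ⟨hj1, hj2⟩ := mid_spec hk hj
              have hzj := hmid j hj1 hj2
              exact Nat.mul_le_mul (by omega) (by have := (hga j).2; omega)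
        _ = (k-2) * ((b - a - 1)*(b-a)) := by
              rw [Finset.sum_const, hcard, smul_eq_mul]
      omega
    have hfin : (k-2)*((b - a - 1)*(b-a)) + (a-1)*(b-a)
        < (k-2)*((b-a)*(b-a)) + a * (b-a) + 1 := by
      have e1 : (k-2)*((b - a - 1)*(b-a)) ≤ (k-2)*((b-a)*(b-a)) :=
        Nat.mul_le_mul_left _ (Nat.mul_le_mul_right _ (by omega))
      have e2 : (a-1)*(b-a) ≤ a * (b-a) := Nat.mul_le_mul_right _ (by omega)
      omega
    omega


lemma W2 (hk : 2 ≤ k) (gens : Fin k → ℕ) (hmono : StrictMono gens) {x l : ℕ}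
    (hl : l ∈ lenSet k gens x) :
    (∃ l₀ ∈ lenSet k gens x, l = l₀ + (gens ⟨k-1, Nat.sub_lt (lt_of_lt_of_le two_pos hk) one_pos⟩ - gens ⟨0, lt_of_lt_of_le two_pos hk⟩)) ∨
      ∀ l'' ∈ lenSet k gens x, gens ⟨k-1, Nat.sub_lt (lt_of_lt_of_le two_pos hk) one_pos⟩ * l < gens ⟨k-1, Nat.sub_lt (lt_of_lt_of_le two_pos hk) one_pos⟩ * l'' +
        (gens ⟨k-1, Nat.sub_lt (lt_of_lt_of_le two_pos hk) one_pos⟩ * (gens ⟨k-1, Nat.sub_lt (lt_of_lt_of_le two_pos hk) one_pos⟩ - gens ⟨0, lt_of_lt_of_le two_pos hk⟩)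
          + (k-2)*((gens ⟨k-1, Nat.sub_lt (lt_of_lt_of_le two_pos hk) one_pos⟩ - gens ⟨0, lt_of_lt_of_le two_pos hk⟩)
            *(gens ⟨k-1, Nat.sub_lt (lt_of_lt_of_le two_pos hk) one_pos⟩ - gens ⟨0, lt_of_lt_of_le two_pos hk⟩))) := by
  set i0 : Fin k := ⟨0, lt_of_lt_of_le two_pos hk⟩ with hi0
  set iK : Fin k := ⟨k-1, Nat.sub_lt (lt_of_lt_of_le two_pos hk) one_pos⟩ with hiK
  set a := gens i0 with ha
  set b := gens iK with hb
  have hi0K : i0 ≠ iK := by simp [hi0, hiK, Fin.ext_iff]; omega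
  have hab : a < b := hmono (by simp [Fin.lt_def, hi0, hiK]; omega)
  have hga : ∀ i : Fin k, a ≤ gens i ∧ gens i ≤ b := fun i => gens_le hk gens hmono i
  obtain ⟨z, hzx, hlz⟩ := hl
  obtain ⟨z', hv, hs, hmid0⟩ := sat hk gens hmono z
  have hmid : ∀ i : Fin k, 0 < i.1 → i.1 + 1 < k → z' i < b - a := hmid0
  clear hmid0
  by_cases h0b : b ≤ z' i0
  · left
    set z₁ : Fin k → ℕ := fun j =>
      if j = i0 then z' i0 - b else if j = iK then z' iK + a else z' j with hz₁
    have hv0 : z₁ i0 = z' i0 - b := by simp [hz₁]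
    have hvK : z₁ iK = z' iK + a := by simp [hz₁, Ne.symm hi0K]
    have hout : ∀ j ∉ ({i0, iK} : Finset (Fin k)), z₁ j = z' j := by
      intro j hj; simp at hj; simp [hz₁, hj.1, hj.2]
    have hcv := sum_comm_outside gens z' z₁ {i0, iK} hout
    have hcs := sum_comm_outside' z' z₁ {i0, iK} hout
    rw [Finset.sum_insert (by simp [hi0K]), Finset.sum_singleton,
      Finset.sum_insert (by simp [hi0K]), Finset.sum_singleton] at hcv hcs
    rw [hv0, hvK] at hcv hcs
    rw [show gens iK = b from rfl, show gens i0 = a from rfl] at hcv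
    have hveq : ∑ i, z₁ i * gens i = ∑ i, z' i * gens i := by
      have e : (z' i0 - b) * a + (z' iK + a) * b = z' i0 * a + z' iK * b := by
        zify [h0b]; ring
      omega
    exact ⟨∑ i, z₁ i, ⟨z₁, by omega, rfl⟩, by omega⟩
  · right
    rintro l'' ⟨w, hwx, hwl⟩
    push_neg at h0b
    have h1 : x ≤ b * l'' := by
      rw [hwl, hwx, Finset.mul_sum]
      apply Finset.sum_le_sum
      intro i _
      calc w i * gens i ≤ w i * b := Nat.mul_le_mul_left _ (hga i).2
      _ = b * w i := by ring
    have h2 : b * l = x + ∑ i, z' i * (b - gens i) := by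
      have e : ∀ i : Fin k, z' i * b = z' i * gens i + z' i * (b - gens i) := by
        intro i
        obtain ⟨d, hd⟩ : ∃ d, b = gens i + d := ⟨b - gens i, by have := (hga i).2; omega⟩
        rw [hd, Nat.add_sub_cancel_left]; ring
      have e2 : (∑ i, z' i * b) = b * l := by
        rw [← Finset.sum_mul, hs, ← hlz, mul_comm]
      calc b * l = ∑ i, z' i * b := e2.symm
      _ = ∑ i, (z' i * gens i + z' i * (b - gens i)) := Finset.sum_congr rfl (fun i _ => e i)
      _ = (∑ i, z' i * gens i) + ∑ i, z' i * (b - gens i) := Finset.sum_add_distrib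
      _ = x + ∑ i, z' i * (b - gens i) := by omega
    have h3 : ∑ i, z' i * (b - gens i) ≤ (k-2)*((b - a - 1)*(b-a)) + (b-1)*(b-a) := by
      have hsplit : ∑ i, z' i * (b - gens i)
          = (∑ i ∈ (Finset.univ.erase i0).erase iK, z' i * (b - gens i))
            + z' iK * (b - gens iK) + z' i0 * (b - gens i0) :=
        sum_split2 hk (fun i => z' i * (b - gens i))
      rw [hsplit]
      have e0 : z' iK * (b - gens iK) = 0 := by
        rw [show gens iK = b from rfl]; simp
      have eK : z' i0 * (b - gens i0) ≤ (b-1) * (b-a) :=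
        Nat.mul_le_mul (by omega) (by rw [show gens i0 = a from rfl])
      have eE : ∑ i ∈ (Finset.univ.erase i0).erase iK, z' i * (b - gens i)
          ≤ (k-2) * ((b - a - 1)*(b-a)) := by
        have hcard : ((Finset.univ.erase i0).erase iK).card = k - 2 := card_mid hk
        calc ∑ i ∈ (Finset.univ.erase i0).erase iK, z' i * (b - gens i)
            ≤ ∑ _i ∈ (Finset.univ.erase i0).erase iK, (b - a - 1)*(b-a) := by
              apply Finset.sum_le_sum
              intro j hj
              obtain ⟨hj1, hj2⟩ := mid_spec hk hj
              have hzj := hmid j hj1 hj2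
              exact Nat.mul_le_mul (by omega) (by have := (hga j).1; omega)
        _ = (k-2) * ((b - a - 1)*(b-a)) := by
              rw [Finset.sum_const, hcard, smul_eq_mul]
      omega
    have hfin : (k-2)*((b - a - 1)*(b-a)) + (b-1)*(b-a)
        < b * (b-a) + (k-2)*((b-a)*(b-a)) := by
      have e1 : (k-2)*((b - a - 1)*(b-a)) ≤ (k-2)*((b-a)*(b-a)) :=
        Nat.mul_le_mul_left _ (Nat.mul_le_mul_right _ (by omega))
      have e2 : (b-1)*(b-a) < b * (b-a) :=
        Nat.mul_lt_mul_of_lt_of_le (by omega) (le_refl _) (by omega)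
      omega
    omega

lemma down (hk : 2 ≤ k) (gens : Fin k → ℕ) (hmono : StrictMono gens)
    (hpos : 0 < gens ⟨0, lt_of_lt_of_le two_pos hk⟩) {x l : ℕ}
    (hx : 2*k*(gens ⟨1, lt_of_lt_of_le one_lt_two hk⟩)
      *(gens ⟨k-1, Nat.sub_lt (lt_of_lt_of_le two_pos hk) one_pos⟩)^2 ≤ x)
    (hl : l ∈ lenSet k gens (x + gens ⟨0, lt_of_lt_of_le two_pos hk⟩
      * gens ⟨k-1, Nat.sub_lt (lt_of_lt_of_le two_pos hk) one_pos⟩)) :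
    (∃ l' ∈ lenSet k gens x, l = l' + gens ⟨0, lt_of_lt_of_le two_pos hk⟩) ∨
      (∃ l' ∈ lenSet k gens x,
        l = l' + gens ⟨k-1, Nat.sub_lt (lt_of_lt_of_le two_pos hk) one_pos⟩) := by
  set i0 : Fin k := ⟨0, lt_of_lt_of_le two_pos hk⟩ with hi0
  set iK : Fin k := ⟨k-1, Nat.sub_lt (lt_of_lt_of_le two_pos hk) one_pos⟩ with hiK
  set i1 : Fin k := ⟨1, lt_of_lt_of_le one_lt_two hk⟩ with hi1
  set a := gens i0 with ha
  set b := gens iK with hb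
  set c := gens i1 with hc
  have hi0K : i0 ≠ iK := by simp [hi0, hiK, Fin.ext_iff]; omega
  have hab : a < b := hmono (by simp [Fin.lt_def, hi0, hiK]; omega)
  have hac : a < c := hmono (by simp [Fin.lt_def, hi0, hi1])
  have hga : ∀ i : Fin k, a ≤ gens i ∧ gens i ≤ b := fun i => gens_le hk gens hmono i
  obtain ⟨z, hzx, hlz⟩ := hl
  obtain ⟨z', hv, hs, hmid0⟩ := sat hk gens hmono z
  have hmid : ∀ i : Fin k, 0 < i.1 → i.1 + 1 < k → z' i < b - a := hmid0
  clear hmid0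
  by_cases hKa : a ≤ z' iK
  · left
    set z₁ : Fin k → ℕ := fun j => if j = iK then z' iK - a else z' j with hz₁
    have hvK : z₁ iK = z' iK - a := by simp [hz₁]
    have hout : ∀ j ∉ ({iK} : Finset (Fin k)), z₁ j = z' j := by
      intro j hj; simp at hj; simp [hz₁, hj]
    have hcv := sum_comm_outside gens z' z₁ {iK} hout
    have hcs := sum_comm_outside' z' z₁ {iK} hout
    rw [Finset.sum_singleton, Finset.sum_singleton] at hcv hcs
    rw [hvK] at hcv hcs
    rw [show gens iK = b from rfl] at hcv
    have e : (z' iK - a) * b + a * b = z' iK * b := by zify [hKa]; ring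
    refine ⟨∑ i, z₁ i, ⟨z₁, by omega, rfl⟩, by omega⟩
  · by_cases h0b : b ≤ z' i0
    · right
      set z₁ : Fin k → ℕ := fun j => if j = i0 then z' i0 - b else z' j with hz₁
      have hv0 : z₁ i0 = z' i0 - b := by simp [hz₁]
      have hout : ∀ j ∉ ({i0} : Finset (Fin k)), z₁ j = z' j := by
        intro j hj; simp at hj; simp [hz₁, hj]
      have hcv := sum_comm_outside gens z' z₁ {i0} hout
      have hcs := sum_comm_outside' z' z₁ {i0} hout
      rw [Finset.sum_singleton, Finset.sum_singleton] at hcv hcs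
      rw [hv0] at hcv hcs
      rw [show gens i0 = a from rfl] at hcv
      have e : (z' i0 - b) * a + a * b = z' i0 * a := by zify [h0b]; ring
      refine ⟨∑ i, z₁ i, ⟨z₁, by omega, rfl⟩, by omega⟩
    · exfalso
      push_neg at hKa h0b
      have hsplit : ∑ i, z' i * gens i
          = (∑ i ∈ (Finset.univ.erase i0).erase iK, z' i * gens i)
            + z' iK * gens iK + z' i0 * gens i0 :=
        sum_split2 hk (fun i => z' i * gens i)
      have eK : z' iK * gens iK ≤ (a-1) * b :=
        Nat.mul_le_mul (by omega) (by rw [show gens iK = b from rfl])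
      have e0 : z' i0 * gens i0 ≤ (b-1) * a :=
        Nat.mul_le_mul (by omega) (by rw [show gens i0 = a from rfl])
      have eE : ∑ i ∈ (Finset.univ.erase i0).erase iK, z' i * gens i
          ≤ (k-2) * ((b - a - 1)*b) := by
        have hcard : ((Finset.univ.erase i0).erase iK).card = k - 2 := card_mid hk
        calc ∑ i ∈ (Finset.univ.erase i0).erase iK, z' i * gens i
            ≤ ∑ _i ∈ (Finset.univ.erase i0).erase iK, (b - a - 1)*b := by
              apply Finset.sum_le_sum
              intro j hj
              obtain ⟨hj1, hj2⟩ := mid_spec hk hj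
              have hzj := hmid j hj1 hj2
              exact Nat.mul_le_mul (by omega) (hga j).2
        _ = (k-2) * ((b - a - 1)*b) := by
              rw [Finset.sum_const, hcard, smul_eq_mul]
      rw [pow_two] at hx
      have hcb : c ≤ b := (hga i1).2
      have f1 : (k-2) * ((b - a - 1)*b) ≤ k * (b*b) :=
        Nat.mul_le_mul (by omega) (Nat.mul_le_mul_right _ (by omega))
      have f2 : (a-1)*b ≤ a*b := Nat.mul_le_mul_right _ (by omega)
      have f3 : (b-1)*a ≤ a*b := by
        calc (b-1)*a ≤ b * a := Nat.mul_le_mul_right _ (by omega)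
        _ = a * b := mul_comm _ _
      have f4 : 4 * (k * (b*b)) ≤ 2*k*c*(b*b) := by
        have : 2 ≤ c := by omega
        calc 4 * (k * (b*b)) = (2*k*2)*(b*b) := by ring
        _ ≤ (2*k*c)*(b*b) := Nat.mul_le_mul_right _ (Nat.mul_le_mul_left _ this)
        _ = 2*k*c*(b*b) := rfl
      have f5 : a * b < k * (b*b) := by
        have h1 : a * b < b * b := Nat.mul_lt_mul_of_lt_of_le hab (le_refl _) (by omega)
        have h2 : b * b ≤ k * (b * b) := Nat.le_mul_of_pos_left _ (by omega)
        omega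
      omega


lemma SPnum (k a b c t x : ℕ) (hk : 2 ≤ k) (ha : 1 ≤ a) (hab : a < b)
    (hac : a < c) (hcb : c ≤ b) (ht : b = a + t) (hx : 2*k*c*(b*b) ≤ x) :
    t*b*((k-1)*(a-1)) + a*t*((k-1)*(b-1))
      + (a*(b*t + (k-2)*(t*t)) + b*((k-2)*(t*t) + a*t + 1)) ≤ t*x := by
  obtain ⟨K, rfl⟩ : ∃ K, k = K + 2 := ⟨k - 2, by omega⟩
  obtain ⟨A, rfl⟩ : ∃ A, a = A + 1 := ⟨a - 1, by omega⟩
  obtain ⟨T, hT⟩ : ∃ T, t = T + 1 := ⟨t - 1, by omega⟩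
  subst hT
  subst ht
  have hr1 : K + 2 - 1 = K + 1 := by omega
  have hr2 : K + 2 - 2 = K := by omega
  have hr3 : A + 1 - 1 = A := by omega
  have hr4 : A + 1 + (T + 1) - 1 = A + T + 1 := by omega
  rw [hr1, hr2, hr3, hr4]
  have key : (T+1)*(A+1+(T+1))*((K+1)*A) + (A+1)*(T+1)*((K+1)*(A+T+1))
      + ((A+1)*((A+1+(T+1))*(T+1) + K*((T+1)*(T+1)))
        + (A+1+(T+1))*(K*((T+1)*(T+1)) + (A+1)*(T+1) + 1))
      ≤ (T+1)*(2*(K+2)*(A+2)*((A+1+(T+1))*(A+1+(T+1)))) := by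
    apply Nat.le.intro (k :=
      25 + 12*K + 55*T + 23*T*K + 37*T^2 + 14*T^2*K + 8*T^3 + 3*T^3*K + 37*A
      + 18*A*K + 66*A*T + 30*A*T*K + 32*A*T^2 + 14*A*T^2*K + 4*A*T^3 + 2*A*T^3*K
      + 20*A^2 + 10*A^2*K + 28*A^2*T + 14*A^2*T*K + 8*A^2*T^2 + 4*A^2*T^2*K
      + 4*A^3 + 2*A^3*K + 4*A^3*T + 2*A^3*T*K)
    ring
  have step2 : (T+1)*(2*(K+2)*(A+2)*((A+1+(T+1))*(A+1+(T+1))))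
      ≤ (T+1)*(2*(K+2)*c*((A+1+(T+1))*(A+1+(T+1)))) := by
    apply Nat.mul_le_mul_left
    apply Nat.mul_le_mul_right
    apply Nat.mul_le_mul_left
    omega
  have step3 : (T+1)*(2*(K+2)*c*((A+1+(T+1))*(A+1+(T+1)))) ≤ (T+1)*x :=
    Nat.mul_le_mul_left _ hx
  omega

lemma SP (hk : 2 ≤ k) (gens : Fin k → ℕ) (hmono : StrictMono gens)
    (hpos : 0 < gens ⟨0, lt_of_lt_of_le two_pos hk⟩) {x : ℕ}
    (hx : 2*k*(gens ⟨1, lt_of_lt_of_le one_lt_two hk⟩)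
      *(gens ⟨k-1, Nat.sub_lt (lt_of_lt_of_le two_pos hk) one_pos⟩)^2 ≤ x)
    {l : ℕ} (hl : l ∈ lenSet k gens x) :
    ∃ l₁ l₂, l₁ ∈ lenSet k gens x ∧ l₂ ∈ lenSet k gens x ∧
      gens ⟨0, lt_of_lt_of_le two_pos hk⟩
          * gens ⟨k-1, Nat.sub_lt (lt_of_lt_of_le two_pos hk) one_pos⟩ * l₁
        + (gens ⟨0, lt_of_lt_of_le two_pos hk⟩
            * (gens ⟨k-1, Nat.sub_lt (lt_of_lt_of_le two_pos hk) one_pos⟩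
                * (gens ⟨k-1, Nat.sub_lt (lt_of_lt_of_le two_pos hk) one_pos⟩
                  - gens ⟨0, lt_of_lt_of_le two_pos hk⟩)
              + (k-2)*((gens ⟨k-1, Nat.sub_lt (lt_of_lt_of_le two_pos hk) one_pos⟩
                  - gens ⟨0, lt_of_lt_of_le two_pos hk⟩)
                *(gens ⟨k-1, Nat.sub_lt (lt_of_lt_of_le two_pos hk) one_pos⟩
                  - gens ⟨0, lt_of_lt_of_le two_pos hk⟩)))
          + gens ⟨k-1, Nat.sub_lt (lt_of_lt_of_le two_pos hk) one_pos⟩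
            * ((k-2)*((gens ⟨k-1, Nat.sub_lt (lt_of_lt_of_le two_pos hk) one_pos⟩
                  - gens ⟨0, lt_of_lt_of_le two_pos hk⟩)
                *(gens ⟨k-1, Nat.sub_lt (lt_of_lt_of_le two_pos hk) one_pos⟩
                  - gens ⟨0, lt_of_lt_of_le two_pos hk⟩))
              + gens ⟨0, lt_of_lt_of_le two_pos hk⟩
                * (gens ⟨k-1, Nat.sub_lt (lt_of_lt_of_le two_pos hk) one_pos⟩
                  - gens ⟨0, lt_of_lt_of_le two_pos hk⟩) + 1))
      ≤ gens ⟨0, lt_of_lt_of_le two_pos hk⟩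
          * gens ⟨k-1, Nat.sub_lt (lt_of_lt_of_le two_pos hk) one_pos⟩ * l₂ := by
  set i0 : Fin k := ⟨0, lt_of_lt_of_le two_pos hk⟩ with hi0
  set iK : Fin k := ⟨k-1, Nat.sub_lt (lt_of_lt_of_le two_pos hk) one_pos⟩ with hiK
  set i1 : Fin k := ⟨1, lt_of_lt_of_le one_lt_two hk⟩ with hi1
  set a := gens i0 with ha
  set b := gens iK with hb
  set c := gens i1 with hc
  have hi0K : i0 ≠ iK := by simp [hi0, hiK, Fin.ext_iff]; omega
  have hab : a < b := hmono (by simp [Fin.lt_def, hi0, hiK]; omega)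
  have hac : a < c := hmono (by simp [Fin.lt_def, hi0, hi1])
  have hga : ∀ i : Fin k, a ≤ gens i ∧ gens i ≤ b := fun i => gens_le hk gens hmono i
  have hbpos : 0 < b := by omega
  obtain ⟨z, hzx, hlz⟩ := hl
  set SB := ∑ j ∈ Finset.univ.erase iK, (z j / b) * gens j with hSB
  set SA := ∑ j ∈ Finset.univ.erase i0, (z j / a) * gens j with hSA
  set RB := ∑ j ∈ Finset.univ.erase iK, (z j % b) with hRB
  set RA := ∑ j ∈ Finset.univ.erase i0, (z j % a) with hRA
  set GB := ∑ j ∈ Finset.univ.erase iK, (z j % b) * gens j with hGB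
  set GA := ∑ j ∈ Finset.univ.erase i0, (z j % a) * gens j with hGA
  set XK := ∑ j ∈ Finset.univ.erase iK, z j * gens j with hXKd
  set X0 := ∑ j ∈ Finset.univ.erase i0, z j * gens j with hX0d
  have hXK : XK + z iK * b = x := by
    have h := Finset.sum_erase_add Finset.univ (fun j => z j * gens j) (Finset.mem_univ iK)
    rw [← hzx] at h
    exact h
  have hX0 : X0 + z i0 * a = x := by
    have h := Finset.sum_erase_add Finset.univ (fun j => z j * gens j) (Finset.mem_univ i0)
    rw [← hzx] at h
    exact h
  have hR2 : a * SA + GA = X0 := by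
    rw [hSA, hGA, hX0d, Finset.mul_sum, ← Finset.sum_add_distrib]
    apply Finset.sum_congr rfl
    intro j _
    have := Nat.div_add_mod (z j) a
    calc a * ((z j / a) * gens j) + (z j % a) * gens j
        = (a * (z j / a) + z j % a) * gens j := by ring
    _ = z j * gens j := by rw [this]
  have hR1 : b * SB + GB = XK := by
    rw [hSB, hGB, hXKd, Finset.mul_sum, ← Finset.sum_add_distrib]
    apply Finset.sum_congr rfl
    intro j _
    have := Nat.div_add_mod (z j) b
    calc b * ((z j / b) * gens j) + (z j % b) * gens j
        = (b * (z j / b) + z j % b) * gens j := by ring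
    _ = z j * gens j := by rw [this]
  set zA : Fin k → ℕ := fun i => if i = i0 then z i0 + SA else z i % a with hzA
  set zB : Fin k → ℕ := fun i => if i = iK then z iK + SB else z i % b with hzB
  have hsumA : ∀ (w : Fin k → ℕ),
      ∑ i, zA i * w i = (∑ j ∈ Finset.univ.erase i0, (z j % a) * w j) + (z i0 + SA) * w i0 := by
    intro w
    rw [← Finset.sum_erase_add Finset.univ _ (Finset.mem_univ i0)]
    have e : ∑ j ∈ Finset.univ.erase i0, zA j * w j
        = ∑ j ∈ Finset.univ.erase i0, (z j % a) * w j := by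
      apply Finset.sum_congr rfl
      intro j hj
      have : j ≠ i0 := (Finset.mem_erase.mp hj).1
      simp [hzA, this]
    rw [e, show zA i0 = z i0 + SA by simp [hzA]]
  have hsumB : ∀ (w : Fin k → ℕ),
      ∑ i, zB i * w i = (∑ j ∈ Finset.univ.erase iK, (z j % b) * w j) + (z iK + SB) * w iK := by
    intro w
    rw [← Finset.sum_erase_add Finset.univ _ (Finset.mem_univ iK)]
    have e : ∑ j ∈ Finset.univ.erase iK, zB j * w j
        = ∑ j ∈ Finset.univ.erase iK, (z j % b) * w j := by
      apply Finset.sum_congr rfl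
      intro j hj
      have : j ≠ iK := (Finset.mem_erase.mp hj).1
      simp [hzB, this]
    rw [e, show zB iK = z iK + SB by simp [hzB]]
  have hmemA : x = ∑ i, zA i * gens i := by
    rw [hsumA gens]
    rw [show gens i0 = a from rfl]
    have : (z i0 + SA) * a = z i0 * a + a * SA := by ring
    omega
  have hmemB : x = ∑ i, zB i * gens i := by
    rw [hsumB gens]
    rw [show gens iK = b from rfl]
    have : (z iK + SB) * b = z iK * b + b * SB := by ring
    omega
  have hlenA : ∑ i, zA i = RA + (z i0 + SA) := by
    have h := hsumA (fun _ => 1)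
    simpa [hRA] using h
  have hlenB : ∑ i, zB i = RB + (z iK + SB) := by
    have h := hsumB (fun _ => 1)
    simpa [hRB] using h
  refine ⟨∑ i, zB i, ∑ i, zA i, ⟨zB, hmemB, rfl⟩, ⟨zA, hmemA, rfl⟩, ?_⟩
  -- now the numeric chain
  have hcard0 : (Finset.univ.erase i0).card = k - 1 := by
    rw [Finset.card_erase_of_mem (Finset.mem_univ _)]
    simp
  have hcardK : (Finset.univ.erase iK).card = k - 1 := by
    rw [Finset.card_erase_of_mem (Finset.mem_univ _)]
    simp
  have hRAb : RA ≤ (k-1)*(a-1) := by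
    rw [hRA]
    calc ∑ j ∈ Finset.univ.erase i0, (z j % a)
        ≤ ∑ _j ∈ Finset.univ.erase i0, (a-1) := by
          apply Finset.sum_le_sum
          intro j _
          have := Nat.mod_lt (z j) hpos
          omega
    _ = (k-1)*(a-1) := by rw [Finset.sum_const, hcard0, smul_eq_mul]
  have hRBb : RB ≤ (k-1)*(b-1) := by
    rw [hRB]
    calc ∑ j ∈ Finset.univ.erase iK, (z j % b)
        ≤ ∑ _j ∈ Finset.univ.erase iK, (b-1) := by
          apply Finset.sum_le_sum
          intro j _
          have := Nat.mod_lt (z j) hbpos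
          omega
    _ = (k-1)*(b-1) := by rw [Finset.sum_const, hcardK, smul_eq_mul]
  have hGAle : GA ≤ RA * b := by
    rw [hGA, hRA, Finset.sum_mul]
    apply Finset.sum_le_sum
    intro j _
    exact Nat.mul_le_mul_left _ (hga j).2
  have hGBge : RB * a ≤ GB := by
    rw [hGB, hRB, Finset.sum_mul]
    apply Finset.sum_le_sum
    intro j _
    exact Nat.mul_le_mul_left _ (hga j).1
  have hP1 : a*b*(∑ i, zA i) + b*GA = a*b*z i0 + a*b*RA + b*X0 := by
    have e1 : a*b*(∑ i, zA i) = a*b*z i0 + b*(a*SA) + a*b*RA := by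
      rw [hlenA]; ring
    have e2 : b*(a*SA) + b*GA = b*X0 := by
      rw [← hR2]; ring
    omega
  have hP2 : a*b*(∑ i, zB i) + a*GB = a*b*z iK + a*b*RB + a*XK := by
    have e1 : a*b*(∑ i, zB i) = a*b*z iK + a*(b*SB) + a*b*RB := by
      rw [hlenB]; ring
    have e2 : a*(b*SB) + a*GB = a*XK := by
      rw [← hR1]; ring
    omega
  have hP3 : b*X0 + a*b*z i0 = b*x := by rw [← hX0]; ring
  have hP4 : a*XK + a*b*z iK = a*x := by rw [← hXK]; ring
  have hP5 : a*x + (b-a)*x = b*x := by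
    zify [Nat.le_of_lt hab]; ring
  have hQ1 : b*GA ≤ a*b*RA + (b-a)*b*RA := by
    have e1 : b*GA ≤ b*(RA*b) := Nat.mul_le_mul_left _ hGAle
    have e2 : b*(RA*b) = a*b*RA + (b-a)*b*RA := by
      zify [Nat.le_of_lt hab]; ring
    omega
  have hQ1' : (b-a)*b*RA ≤ (b-a)*b*((k-1)*(a-1)) := Nat.mul_le_mul_left _ hRAb
  have hQ2 : a*b*RB ≤ a*GB + a*(b-a)*RB := by
    have e1 : a*(RB*a) ≤ a*GB := Nat.mul_le_mul_left _ hGBge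
    have e2 : a*(RB*a) + a*(b-a)*RB = a*b*RB := by
      zify [Nat.le_of_lt hab]; ring
    omega
  have hQ2' : a*(b-a)*RB ≤ a*(b-a)*((k-1)*(b-1)) := Nat.mul_le_mul_left _ hRBb
  have hnum : (b-a)*b*((k-1)*(a-1)) + a*(b-a)*((k-1)*(b-1))
      + (a*(b*(b-a) + (k-2)*((b-a)*(b-a))) + b*((k-2)*((b-a)*(b-a)) + a*(b-a) + 1))
      ≤ (b-a)*x := by
    have hx' : 2*k*c*(b*b) ≤ x := by
      rw [pow_two] at hx
      exact hx
    exact SPnum k a b c (b-a) x hk (by omega) hab hac (hga i1).2 (by omega) hx'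
  omega


lemma main (hk : 2 ≤ k) (gens : Fin k → ℕ) (hmono : StrictMono gens)
    (hpos : 0 < gens ⟨0, lt_of_lt_of_le two_pos hk⟩) {x : ℕ}
    (hx : 2*k*(gens ⟨1, lt_of_lt_of_le one_lt_two hk⟩)
      *(gens ⟨k-1, Nat.sub_lt (lt_of_lt_of_le two_pos hk) one_pos⟩)^2 ≤ x)
    (hne : ∃ l₀, l₀ ∈ lenSet k gens x) :
    deltaSet k gens (x + gens ⟨0, lt_of_lt_of_le two_pos hk⟩
        * gens ⟨k-1, Nat.sub_lt (lt_of_lt_of_le two_pos hk) one_pos⟩)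
      = deltaSet k gens x := by
  set i0 : Fin k := ⟨0, lt_of_lt_of_le two_pos hk⟩ with hi0
  set iK : Fin k := ⟨k-1, Nat.sub_lt (lt_of_lt_of_le two_pos hk) one_pos⟩ with hiK
  set a := gens i0 with ha
  set b := gens iK with hb
  have hab : a < b := hmono (by simp [Fin.lt_def, hi0, hiK]; omega)
  have hapos : 0 < a := hpos
  have hbpos : 0 < b := by omega
  set t := b - a with htdef
  set C₁ := (k-2)*(t*t) + a*t + 1 with hC₁
  set C₂ := b*t + (k-2)*(t*t) with hC₂
  set L := lenSet k gens x with hL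
  set U := lenSet k gens (x + a * b) with hU
  have up_a : ∀ {l}, l ∈ L → l + a ∈ U := by
    intro l hl
    exact lenSet_add gens iK a x l hl
  have up_b : ∀ {l}, l ∈ L → l + b ∈ U := by
    intro l hl
    have h := lenSet_add gens i0 b x l hl
    rwa [show x + b * a = x + a * b from by ring] at h
  have down' : ∀ {l}, l ∈ U → (∃ l' ∈ L, l = l' + a) ∨ (∃ l' ∈ L, l = l' + b) :=
    fun {l} hl => down hk gens hmono hpos hx hl
  have W1x : ∀ {l}, l ∈ L → (l + t ∈ L ∨ ∀ l'' ∈ L, a*l'' < a*l + C₁) :=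
    fun {l} hl => W1 hk gens hmono hl
  have W2x : ∀ {l}, l ∈ L → ((∃ l₀ ∈ L, l = l₀ + t) ∨ ∀ l'' ∈ L, b*l < b*l'' + C₂) :=
    fun {l} hl => W2 hk gens hmono hl
  have contra : ∀ (p q : ℕ), p ≤ q → (∀ l'' ∈ L, a*l'' < a*p + C₁) →
      (∀ l'' ∈ L, b*q < b*l'' + C₂) → False := by
    intro p q hpq H1 H2
    obtain ⟨l0, hl0⟩ := hne
    obtain ⟨l₁, l₂, hl₁, hl₂, hsp⟩ := SP hk gens hmono hpos hx hl0
    have g1 : a*l₂ < a*p + C₁ := H1 l₂ hl₂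
    have g2 : b*q < b*l₁ + C₂ := H2 l₁ hl₁
    have g1' : b*(a*l₂) < b*(a*p + C₁) := by
      exact Nat.mul_lt_mul_of_le_of_lt (le_refl b) g1 hbpos
    have g2' : a*(b*q) < a*(b*l₁ + C₂) := by
      exact Nat.mul_lt_mul_of_le_of_lt (le_refl a) g2 hapos
    have g3 : a*b*p ≤ a*b*q := Nat.mul_le_mul_left _ hpq
    have e1 : b*(a*l₂) = a*b*l₂ := by ring
    have e2 : b*(a*p + C₁) = a*b*p + b*C₁ := by ring
    have e3 : a*(b*q) = a*b*q := by ring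
    have e4 : a*(b*l₁ + C₂) = a*b*l₁ + a*C₂ := by ring
    have hsp' : a*b*l₁ + (a*C₂ + b*C₁) ≤ a*b*l₂ := hsp
    omega
  ext d
  simp only [deltaSet, Set.mem_setOf_eq]
  constructor
  · rintro ⟨hd, s, hs, hsd, hadj⟩
    refine ⟨hd, ?_⟩
    by_cases hA1 : ∃ u ∈ L, s = u + a
    · obtain ⟨u, hu, rfl⟩ := hA1
      by_cases hA2 : ∃ v ∈ L, u + a + d = v + a
      · obtain ⟨v, hv, hveq⟩ := hA2
        have hvu : v = u + d := by omega
        refine ⟨u, hu, by rwa [hvu] at hv, ?_⟩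
        intro j hj1 hj2 hjL
        exact hadj (j + a) (by omega) (by omega) (up_a hjL)
      · rcases down' hsd with ⟨v, hv, hveq⟩ | ⟨v, hv, hveq⟩
        · exact absurd ⟨v, hv, hveq⟩ hA2
        · by_cases hB1 : ∃ w ∈ L, u + a = w + b
          · obtain ⟨w, hw, hweq⟩ := hB1
            have hvw : v = w + d := by omega
            refine ⟨w, hw, by rwa [hvw] at hv, ?_⟩
            intro j hj1 hj2 hjL
            exact hadj (j + b) (by omega) (by omega) (up_b hjL)
          · exfalso
            have hvu : v ≤ u := by
              by_contra hlt
              push_neg at hlt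
              exact hadj (v + a) (by omega) (by omega) (up_a hv)
            have H1 : ∀ l'' ∈ L, a*l'' < a*v + C₁ := by
              rcases W1x hv with hvt | H
              · exact absurd ⟨v + t, hvt, by omega⟩ hA2
              · exact H
            have H2 : ∀ l'' ∈ L, b*u < b*l'' + C₂ := by
              rcases W2x hu with ⟨u₀, hu₀, hueq⟩ | H
              · exact absurd ⟨u₀, hu₀, by omega⟩ hB1
              · exact H
            exact contra v u hvu H1 H2
    · rcases down' hs with h | ⟨p, hp, hpeq⟩
      · exact absurd h hA1
      · subst hpeq
        by_cases hB2 : ∃ q ∈ L, p + b + d = q + b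
        · obtain ⟨q, hq, hqeq⟩ := hB2
          have hqp : q = p + d := by omega
          refine ⟨p, hp, by rwa [hqp] at hq, ?_⟩
          intro j hj1 hj2 hjL
          exact hadj (j + b) (by omega) (by omega) (up_b hjL)
        · exfalso
          rcases down' hsd with ⟨q, hq, hqeq⟩ | h
          · have hpq : p ≤ q := by omega
            have H1 : ∀ l'' ∈ L, a*l'' < a*p + C₁ := by
              rcases W1x hp with hpt | H
              · exact absurd ⟨p + t, hpt, by omega⟩ hA1
              · exact H
            have H2 : ∀ l'' ∈ L, b*q < b*l'' + C₂ := by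
              rcases W2x hq with ⟨q₀, hq₀, hqeq0⟩ | H
              · exact absurd ⟨q₀, hq₀, by omega⟩ hB2
              · exact H
            exact contra p q hpq H1 H2
          · exact absurd h hB2
  · rintro ⟨hd, u, hu, hud, hadj⟩
    refine ⟨hd, ?_⟩
    have hdt : d ≤ t := by
      rcases W1x hu with hut | H0
      · by_contra hgt
        push_neg at hgt
        exact hadj (u + t) (by omega) (by omega) hut
      · rcases W2x hud with ⟨v₀, hv₀, hveq⟩ | H0'
        · by_contra hgt
          push_neg at hgt
          exact hadj v₀ (by omega) (by omega) hv₀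
        · exact absurd (contra u (u+d) (by omega) H0 H0') not_false
    by_cases hPa : ∃ w ∈ L, u < w + t ∧ w + t < u + d
    · by_cases hPb : ∃ w ∈ L, u + t < w ∧ w < u + d + t
      · exfalso
        obtain ⟨w₁, hw₁, hw₁a, hw₁b⟩ := hPa
        obtain ⟨w₂, hw₂, hw₂a, hw₂b⟩ := hPb
        have H1 : ∀ l'' ∈ L, a*l'' < a*w₁ + C₁ := by
          rcases W1x hw₁ with h | H
          · exact (hadj (w₁+t) hw₁a hw₁b h).elim
          · exact H
        have H2 : ∀ l'' ∈ L, b*w₂ < b*l'' + C₂ := by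
          rcases W2x hw₂ with ⟨w₀, hw₀, hweq⟩ | H
          · exact (hadj w₀ (by omega) (by omega) hw₀).elim
          · exact H
        exact contra w₁ w₂ (by omega) H1 H2
      · refine ⟨u + b, up_b hu, ?_, ?_⟩
        · have h := up_b hud
          rwa [show u + d + b = u + b + d from by omega] at h
        · intro j hj1 hj2 hjU
          rcases down' hjU with ⟨w, hw, rfl⟩ | ⟨w, hw, rfl⟩
          · refine absurd ⟨w, hw, by omega, by omega⟩ hPb
          · exact hadj w (by omega) (by omega) hw
    · refine ⟨u + a, up_a hu, ?_, ?_⟩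
      · have h := up_a hud
        rwa [show u + d + a = u + a + d from by omega] at h
      · intro j hj1 hj2 hjU
        rcases down' hjU with ⟨w, hw, rfl⟩ | ⟨w, hw, rfl⟩
        · exact hadj w (by omega) (by omega) hw
        · refine absurd ⟨w, hw, by omega, by omega⟩ hPa

end CHK

/-- For S = ⟨n₁ < ⋯ < n_k⟩ and N = 2k n₂ n_k² + n₁ n_k, we have
Δ(n) = Δ(n − n₁n_k) for all n ∈ S with n ≥ N; consequently
Δ(S) is the union of Δ(n) over n ∈ S with n < N. -/
theorem stmt_19 (k : ℕ) (hk : 2 ≤ k) (gens : Fin k → ℕ)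
    (hmono : StrictMono gens) (hpos : 0 < gens ⟨0, by omega⟩)
    (N : ℕ)
    (hN : N = 2 * k * gens ⟨1, by omega⟩ * (gens ⟨k - 1, by omega⟩) ^ 2 +
      gens ⟨0, by omega⟩ * gens ⟨k - 1, by omega⟩) :
    (∀ n : ℕ, n ∈ AddSubmonoid.closure (Set.range gens) → N ≤ n →
      deltaSet k gens n =
        deltaSet k gens (n - gens ⟨0, by omega⟩ * gens ⟨k - 1, by omega⟩)) ∧
    {d : ℕ | ∃ n : ℕ, 0 < n ∧ n ∈ AddSubmonoid.closure (Set.range gens) ∧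
        d ∈ deltaSet k gens n} =
      {d : ℕ | ∃ n : ℕ, 0 < n ∧ n < N ∧ n ∈ AddSubmonoid.closure (Set.range gens) ∧
        d ∈ deltaSet k gens n} := by
  have hpos' : 0 < gens ⟨0, lt_of_lt_of_le two_pos hk⟩ := hpos
  have hN' : N = 2 * k * gens ⟨1, lt_of_lt_of_le one_lt_two hk⟩
      * (gens ⟨k - 1, Nat.sub_lt (lt_of_lt_of_le two_pos hk) one_pos⟩) ^ 2 +
      gens ⟨0, lt_of_lt_of_le two_pos hk⟩
        * gens ⟨k - 1, Nat.sub_lt (lt_of_lt_of_le two_pos hk) one_pos⟩ := hN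
  set i0 : Fin k := ⟨0, lt_of_lt_of_le two_pos hk⟩ with hi0
  set iK : Fin k := ⟨k-1, Nat.sub_lt (lt_of_lt_of_le two_pos hk) one_pos⟩ with hiK
  set i1 : Fin k := ⟨1, lt_of_lt_of_le one_lt_two hk⟩ with hi1
  set a := gens i0 with ha
  set b := gens iK with hb
  set c := gens i1 with hc
  have hab : a < b := hmono (by simp [Fin.lt_def, hi0, hiK]; omega)
  have hac : a < c := hmono (by simp [Fin.lt_def, hi0, hi1])
  have habpos : 0 < a * b := Nat.mul_pos hpos' (by omega)
  have hNpos : 0 < 2*k*c*b^2 := by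
    have h1 : 0 < 2*k := by omega
    have h2 : 0 < c := by omega
    have h3 : 0 < b^2 := pow_pos (by omega) 2
    exact Nat.mul_pos (Nat.mul_pos h1 h2) h3
  have key : ∀ n : ℕ, n ∈ AddSubmonoid.closure (Set.range gens) → N ≤ n →
      deltaSet k gens n = deltaSet k gens (n - a * b) := by
    intro n hn hNn
    obtain ⟨z, hz⟩ := (CHK.mem_closure_iff gens n).mp hn
    set x := n - a*b with hxd
    have hxe : x + a*b = n := by omega
    have hx2 : 2*k*c*b^2 ≤ x := by omega
    have hmem : (∑ i, z i) ∈ lenSet k gens (x + a*b) := ⟨z, by rw [hxe]; exact hz, rfl⟩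
    have hne : ∃ l₀, l₀ ∈ lenSet k gens x := by
      rcases CHK.down hk gens hmono hpos' hx2 hmem with ⟨l', hl', _⟩ | ⟨l', hl', _⟩
      · exact ⟨l', hl'⟩
      · exact ⟨l', hl'⟩
    rw [← hxe]
    exact CHK.main hk gens hmono hpos' hx2 hne
  refine ⟨key, ?_⟩
  ext d
  simp only [Set.mem_setOf_eq]
  constructor
  · rintro ⟨n, hn0, hnS, hd⟩
    induction n using Nat.strong_induction_on with
    | _ n ih =>
      by_cases hlt : n < N
      · exact ⟨n, hn0, hlt, hnS, hd⟩
      · push_neg at hlt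
        have heq := key n hnS hlt
        rw [heq] at hd
        obtain ⟨z, hz⟩ := (CHK.mem_closure_iff gens n).mp hnS
        set x := n - a*b with hxd
        have hxe : x + a*b = n := by omega
        have hx2 : 2*k*c*b^2 ≤ x := by omega
        have hmem : (∑ i, z i) ∈ lenSet k gens (x + a*b) := ⟨z, by rw [hxe]; exact hz, rfl⟩
        have hxcl : x ∈ AddSubmonoid.closure (Set.range gens) := by
          rcases CHK.down hk gens hmono hpos' hx2 hmem with ⟨l', ⟨w, hw, _⟩, _⟩ | ⟨l', ⟨w, hw, _⟩, _⟩
          · exact (CHK.mem_closure_iff gens x).mpr ⟨w, hw⟩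
          · exact (CHK.mem_closure_iff gens x).mpr ⟨w, hw⟩
        exact ih x (by omega) (by omega) hxcl hd
  · rintro ⟨n, hn0, _, hnS, hd⟩
    exact ⟨n, hn0, hnS, hd⟩
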